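/- Let X, Y, Z be metric spaces with d_GH(X,Z) + d_GH(Z,Y) = d_GH(X,Y), d_GH(X,Z) > 0 and d_GH(Z,Y) > 0. Fix z₀ ∈ Z and a positive real δ ≤ min{2·d_GH(X,Z), 2·d_GH(Z,Y)}, and let Z* be Z with an extra point z* attached as above (d(z*,z) = δ for z in the closed δ-ball around z₀, d(z*,z) = d(z₀,z) otherwise). Then d_GH(X,Z*) + d_GH(Z*,Y) = d_GH(X,Y); i.e., Z* also lies on the metric segment [X,Y]. -/

import Mathlib

open scoped ENNReal

/-- A correspondence between `X` and `Y`: a relation whose projections are surjective. -/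
def IsCorr {X Y : Type*} (R : Set (X × Y)) : Prop :=
  (∀ x : X, ∃ y : Y, (x, y) ∈ R) ∧ (∀ y : Y, ∃ x : X, (x, y) ∈ R)

/-- The distortion of a relation: `sup |d(x,x') - d(y,y')|` over pairs in `R`. -/
noncomputable def corrDis {X Y : Type*} [MetricSpace X] [MetricSpace Y]
    (R : Set (X × Y)) : ℝ≥0∞ :=
  ⨆ p ∈ R, ⨆ q ∈ R, edist (dist p.1 q.1) (dist p.2 q.2)

/-- The Gromov–Hausdorff distance: half the infimal distortion of correspondences. -/
noncomputable def ghDist (X Y : Type*) [MetricSpace X] [MetricSpace Y] : ℝ≥0∞ :=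
  (⨅ (R : Set (X × Y)) (_ : IsCorr R), corrDis R) / 2

/-- The distance on `Z* = Z ∪ {z*}` (`z* = none`): `δ` on the closed `δ`-ball around `z₀`,
`dist z₀ z` outside it, and the original metric on `Z`. -/
noncomputable def dStar {Z : Type*} [MetricSpace Z] (z₀ : Z) (δ : ℝ) :
    Option Z → Option Z → ℝ
  | some z, some z' => dist z z'
  | some z, none => if dist z₀ z ≤ δ then δ else dist z₀ z
  | none, some z => if dist z₀ z ≤ δ then δ else dist z₀ z
  | none, none => 0

section helpers
variable {X Y Z : Type*} [MetricSpace X] [MetricSpace Y] [MetricSpace Z]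

lemma le_corrDis {R : Set (X × Y)} {p q : X × Y} (hp : p ∈ R) (hq : q ∈ R) :
    edist (dist p.1 q.1) (dist p.2 q.2) ≤ corrDis R :=
  le_iSup₂_of_le p hp (le_iSup₂_of_le q hq le_rfl)

lemma corrDis_le {R : Set (X × Y)} {c : ℝ≥0∞}
    (h : ∀ p ∈ R, ∀ q ∈ R, edist (dist p.1 q.1) (dist p.2 q.2) ≤ c) : corrDis R ≤ c :=
  iSup₂_le fun p hp => iSup₂_le fun q hq => h p hp q hq

lemma ghDist_le_of_corr {R : Set (X × Y)} (hR : IsCorr R) : ghDist X Y ≤ corrDis R / 2 :=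
  ENNReal.div_le_div_right (iInf₂_le R hR) 2

lemma ghDist_le_symm : ghDist X Y ≤ ghDist Y X := by
  refine ENNReal.div_le_div_right (le_iInf₂ fun R hR => ?_) 2
  refine (iInf₂_le (Prod.swap ⁻¹' R) ⟨fun x => (hR.2 x).imp fun y h => h,
    fun y => (hR.1 y).imp fun x h => h⟩).trans ?_
  refine corrDis_le fun p hp q hq => ?_
  rw [edist_comm]
  exact le_corrDis (R := R) hp hq

lemma ghDist_comm : ghDist X Y = ghDist Y X :=
  le_antisymm ghDist_le_symm ghDist_le_symm

lemma ghDist_triangle : ghDist X Y ≤ ghDist X Z + ghDist Z Y := by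
  conv_rhs => rw [ghDist, ghDist]
  rw [ENNReal.div_add_div_same]
  refine ENNReal.div_le_div_right ?_ 2
  rw [ENNReal.iInf_add]
  refine le_iInf fun R => ?_
  rw [ENNReal.iInf_add]
  refine le_iInf fun hR => ?_
  rw [ENNReal.add_iInf]
  refine le_iInf fun S => ?_
  rw [ENNReal.add_iInf]
  refine le_iInf fun hS => ?_
  set T : Set (X × Y) := {p | ∃ z : Z, (p.1, z) ∈ R ∧ (z, p.2) ∈ S} with hT
  have hTc : IsCorr T := by
    constructor
    · intro x
      obtain ⟨z, hz⟩ := hR.1 x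
      obtain ⟨y, hy⟩ := hS.1 z
      exact ⟨y, z, hz, hy⟩
    · intro y
      obtain ⟨z, hz⟩ := hS.2 y
      obtain ⟨x, hx⟩ := hR.2 z
      exact ⟨x, z, hx, hz⟩
  refine (iInf₂_le T hTc).trans (corrDis_le fun p hp q hq => ?_)
  obtain ⟨z, hz1, hz2⟩ := hp
  obtain ⟨z', hz1', hz2'⟩ := hq
  calc edist (dist p.1 q.1) (dist p.2 q.2)
      ≤ edist (dist p.1 q.1) (dist z z') + edist (dist z z') (dist p.2 q.2) :=
        edist_triangle _ _ _
    _ ≤ corrDis R + corrDis S :=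
        add_le_add (le_corrDis (p := (p.1, z)) (q := (q.1, z')) hz1 hz1')
          (le_corrDis (p := (z, p.2)) (q := (z', q.2)) hz2 hz2')

end helpers

lemma edist_aux {a b δ : ℝ} (hδ : 0 < δ) (hb0 : 0 ≤ b) (hb : b ≤ δ) (ha : 0 ≤ a)
    {c : ℝ≥0∞} (h1 : edist a b ≤ c) (h2 : ENNReal.ofReal δ ≤ c) :
    edist (a : ℝ) δ ≤ c := by
  rw [edist_dist, Real.dist_eq] at h1 ⊢
  rcases le_total a δ with h3 | h3
  · refine le_trans (ENNReal.ofReal_le_ofReal ?_) h2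
    rw [abs_le]; constructor <;> linarith
  · refine le_trans (ENNReal.ofReal_le_ofReal ?_) h1
    rw [abs_of_nonneg (by linarith : (0:ℝ) ≤ a - δ)]
    exact le_trans (by linarith : a - δ ≤ a - b) (le_abs_self _)

lemma ghDist_star_le {X Z : Type*} [MetricSpace X] [MetricSpace Z]
    (z₀ : Z) (δ : ℝ) (hδ : 0 < δ)
    [MetricSpace (Option Z)] (hm : ∀ a b : Option Z, dist a b = dStar z₀ δ a b)
    (hδX : ENNReal.ofReal δ ≤ 2 * ghDist X Z) :
    ghDist X (Option Z) ≤ ghDist X Z := by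
  refine ENNReal.div_le_div_right (le_iInf₂ fun R hR => ?_) 2
  have hcancel : 2 * ghDist X Z = ⨅ (R : Set (X × Z)) (_ : IsCorr R), corrDis R :=
    ENNReal.mul_div_cancel two_ne_zero ENNReal.ofNat_ne_top
  have hδR : ENNReal.ofReal δ ≤ corrDis R :=
    hδX.trans (hcancel ▸ iInf₂_le R hR)
  set Rs : Set (X × Option Z) :=
    {p | p.2.elim ((p.1, z₀) ∈ R) (fun z => (p.1, z) ∈ R)} with hRs
  have hRsc : IsCorr Rs := by
    constructor
    · intro x
      obtain ⟨z, hz⟩ := hR.1 x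
      exact ⟨some z, hz⟩
    · rintro (_ | z)
      · exact hR.2 z₀
      · exact hR.2 z
  refine (iInf₂_le Rs hRsc).trans (corrDis_le fun p hp q hq => ?_)
  obtain ⟨x, a⟩ := p
  obtain ⟨x', b⟩ := q
  simp only [hm]
  match a, b, hp, hq with
  | some z, some z', hp, hq =>
      exact le_corrDis (p := (x, z)) (q := (x', z')) hp hq
  | some z, none, hp, hq =>
      have key := le_corrDis (p := (x, z)) (q := (x', z₀)) hp hq
      simp only [dStar]
      split_ifs with h
      · exact edist_aux hδ dist_nonneg (by rwa [dist_comm]) dist_nonneg key hδR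
      · rw [dist_comm z₀ z]; exact key
  | none, some z', hp, hq =>
      have key := le_corrDis (p := (x, z₀)) (q := (x', z')) hp hq
      simp only [dStar]
      split_ifs with h
      · exact edist_aux hδ dist_nonneg h dist_nonneg key hδR
      · exact key
  | none, none, hp, hq =>
      have key := le_corrDis (p := (x, z₀)) (q := (x', z₀)) hp hq
      simpa [dStar, dist_self] using key


/-- If `Z` lies strictly inside the metric segment `[X,Y]` and `δ ≤ min{2 d_GH(X,Z), 2 d_GH(Z,Y)}`,
then `Z* = Z ∪ {z*}` also lies on the segment `[X,Y]`. -/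
theorem stmt3 {X Y Z : Type*} [MetricSpace X] [MetricSpace Y] [MetricSpace Z]
    (hseg : ghDist X Z + ghDist Z Y = ghDist X Y)
    (hXZ : 0 < ghDist X Z) (hZY : 0 < ghDist Z Y)
    (z₀ : Z) (δ : ℝ) (hδ : 0 < δ)
    (hδX : ENNReal.ofReal δ ≤ 2 * ghDist X Z) (hδY : ENNReal.ofReal δ ≤ 2 * ghDist Z Y)
    [MetricSpace (Option Z)] (hm : ∀ a b : Option Z, dist a b = dStar z₀ δ a b) :
    ghDist X (Option Z) + ghDist (Option Z) Y = ghDist X Y := by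
  have h1 : ghDist X (Option Z) ≤ ghDist X Z := ghDist_star_le z₀ δ hδ hm hδX
  have h2 : ghDist (Option Z) Y ≤ ghDist Z Y := by
    rw [ghDist_comm, ghDist_comm (X := Z)]
    exact ghDist_star_le z₀ δ hδ hm (by rwa [ghDist_comm (X := Y)])
  exact le_antisymm (hseg ▸ add_le_add h1 h2) (ghDist_triangle (Z := Option Z))
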